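/- For any set J, the Banach space ℓ∞(J) of bounded real-valued functions on J with the supremum norm is an injective object of the category of locally convex topological vector spaces over ℝ: every continuous linear map from a linear subspace A of a locally convex space C into ℓ∞(J) extends to a continuous linear map defined on all of C. -/

import Mathlib

open scoped ENNReal
open scoped Topology

/-- A locally convex space `E` is an injective object of the category of locally convex
spaces if every continuous linear map into `E` from a linear subspace of a locally convex
space extends to a continuous linear map on the whole space. -/
def IsInjectiveLCS (E : Type*) [AddCommGroup E] [Module ℝ E] [TopologicalSpace E] : Prop :=
  ∀ (C : Type*) [AddCommGroup C] [Module ℝ C] [TopologicalSpace C]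
    [IsTopologicalAddGroup C] [ContinuousSMul ℝ C] [LocallyConvexSpace ℝ C]
    (A : Submodule ℝ C) (f : A →L[ℝ] E), ∃ g : C →L[ℝ] E, ∀ a : A, g a = f a

theorem linfty_is_injective (J : Type*) :
    IsInjectiveLCS (lp (fun _ : J => ℝ) ∞) := by
  intro C _ _ _ _ _ _ A f
  -- Get a neighborhood U of 0 in C such that ‖f a‖ ≤ 1 whenever ↑a ∈ U
  have hcont : ContinuousAt f 0 := f.continuous.continuousAt
  have h1 : f ⁻¹' Metric.closedBall 0 1 ∈ 𝓝 (0 : A) := by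
    apply hcont
    rw [map_zero]
    exact Metric.closedBall_mem_nhds _ one_pos
  rw [nhds_subtype] at h1
  obtain ⟨U, hU, hUsub⟩ := h1
  -- Shrink to an open absolutely convex neighborhood W
  obtain ⟨W, ⟨hW0, hWopen, hWbal, hWconv⟩, hWU⟩ :=
    (nhds_hasBasis_absConvex_open ℝ C).mem_iff.mp hU
  have hWnhds : W ∈ 𝓝 (0 : C) := hWopen.mem_nhds hW0
  have habs : Absorbent ℝ W := absorbent_nhds_zero hWnhds
  -- key bound on f
  have hb : ∀ a : A, ‖f a‖ ≤ gauge W (a : C) := by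
    intro a
    have key : ∀ ε > 0, ‖f a‖ ≤ gauge W (a : C) + ε := by
      intro ε hε
      set t : ℝ := gauge W (a : C) + ε with ht
      have ht0 : 0 < t := lt_of_lt_of_le hε (le_add_of_nonneg_left (gauge_nonneg _))
      have hx : gauge W (t⁻¹ • (a : C)) < 1 := by
        rw [gauge_smul_of_nonneg (inv_nonneg.2 ht0.le), smul_eq_mul,
          inv_mul_lt_iff₀ ht0, mul_one]
        exact lt_add_of_pos_right _ hε
      have hxW : t⁻¹ • (a : C) ∈ W := by
        rw [← gauge_lt_one_eq_self_of_isOpen hWconv hW0 hWopen]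
        exact hx
      have hmem : (↑(t⁻¹ • a) : C) ∈ U := hWU hxW
      have := hUsub hmem
      simp only [Set.mem_preimage, Metric.mem_closedBall, dist_zero_right] at this
      rw [map_smul, norm_smul, norm_inv, Real.norm_eq_abs, abs_of_pos ht0] at this
      calc ‖f a‖ = t * (t⁻¹ * ‖f a‖) := by
              rw [← mul_assoc, mul_inv_cancel₀ ht0.ne', one_mul]
        _ ≤ t * 1 := mul_le_mul_of_nonneg_left this ht0.le
        _ = t := mul_one t
    by_contra h
    push_neg at h
    have := key ((‖f a‖ - gauge W (a : C)) / 2) (by linarith)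
    linarith
  -- symmetric gauge
  have hsymm : ∀ x : C, gauge W (-x) = gauge W x := by
    intro x
    refine gauge_neg (fun y hy => ?_) x
    have := hWbal (-1) (by simp)
    have : (-1 : ℝ) • y ∈ W := this ⟨y, hy, rfl⟩
    simpa using this
  -- coordinate functionals on A
  set φ : J → (A →ₗ[ℝ] ℝ) := fun j =>
    { toFun := fun a => f a j
      map_add' := by
        intro a b
        simp only [map_add, lp.coeFn_add, Pi.add_apply]
      map_smul' := by
        intro c a
        simp only [map_smul, lp.coeFn_smul, Pi.smul_apply, smul_eq_mul, RingHom.id_apply] }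
  have hφ : ∀ (j : J) (a : A), φ j a ≤ gauge W (a : C) := by
    intro j a
    calc φ j a ≤ |(f a : J → ℝ) j| := le_abs_self _
      _ ≤ ‖f a‖ := lp.norm_apply_le_norm ENNReal.top_ne_zero (f a) j
      _ ≤ gauge W (a : C) := hb a
  -- Hahn-Banach extension for each coordinate
  have hext : ∀ j : J, ∃ g : C →ₗ[ℝ] ℝ,
      (∀ a : A, g a = φ j a) ∧ ∀ x, g x ≤ gauge W x := by
    intro j
    obtain ⟨g, hg1, hg2⟩ := exists_extension_of_le_sublinear ⟨A, φ j⟩ (gauge W)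
      (fun c hc x => by
        rw [gauge_smul_of_nonneg hc.le, smul_eq_mul])
      (gauge_add_le hWconv habs)
      (fun x => hφ j x)
    exact ⟨g, fun a => hg1 a, hg2⟩
  choose g hg1 hg2 using hext
  -- absolute bound
  have hgabs : ∀ (j : J) (x : C), |g j x| ≤ gauge W x := by
    intro j x
    have h1 := hg2 j x
    have h2 := hg2 j (-x)
    rw [map_neg, hsymm] at h2
    rw [abs_le]
    constructor <;> linarith
  -- the extension as a linear map into lp ∞
  have hmem : ∀ x : C, Memℓp (fun j => g j x) ∞ := by
    intro x
    apply memℓp_infty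
    refine ⟨gauge W x, ?_⟩
    rintro r ⟨j, rfl⟩
    simpa [Real.norm_eq_abs] using hgabs j x
  set G : C →ₗ[ℝ] lp (fun _ : J => ℝ) ∞ :=
    { toFun := fun x => ⟨fun j => g j x, hmem x⟩
      map_add' := by
        intro x y
        ext j
        exact map_add (g j) x y
      map_smul' := by
        intro c x
        ext j
        exact map_smul (g j) c x }
  have hGcoe : ∀ (x : C) (j : J), (G x : J → ℝ) j = g j x := fun _ _ => rfl
  have hGnorm : ∀ x : C, ‖G x‖ ≤ gauge W x := by
    intro x
    refine lp.norm_le_of_forall_le (gauge_nonneg _) fun j => ?_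
    simpa [hGcoe, Real.norm_eq_abs] using hgabs j x
  have hGcont : Continuous G := by
    apply continuous_of_continuousAt_zero G.toAddMonoidHom
    rw [ContinuousAt, LinearMap.toAddMonoidHom_coe, map_zero]
    rw [NormedAddCommGroup.tendsto_nhds_zero]
    intro ε hε
    have htend := tendsto_gauge_nhds_zero hWnhds
    have : ∀ᶠ x in 𝓝 (0 : C), gauge W x < ε := by
      have := htend (Metric.ball_mem_nhds 0 hε)
      filter_upwards [this] with x hx
      rw [Set.mem_preimage, Metric.mem_ball, dist_zero_right, Real.norm_eq_abs] at hx
      exact lt_of_le_of_lt (le_abs_self _) hx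
    filter_upwards [this] with x hx
    exact lt_of_le_of_lt (hGnorm x) hx
  refine ⟨⟨G, hGcont⟩, fun a => ?_⟩
  ext j
  rw [ContinuousLinearMap.coe_mk']
  exact hg1 j a
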